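/- Let R be an integral domain with fraction field F, and let f, g ∈ R be nonzero elements with f ≠ g. Then for all positive integers a, b, the following partial fraction decomposition holds in F: 1/(f^a·g^b) = Σ_{i+j=a+b, i,j ≥ 1} (1/(f−g)^j)·((−1)^b·C(j−1,b−1)/f^i + (−1)^{j−a}·C(j−1,a−1)/g^i), where C(m,n) denotes the integer binomial coefficient (mapped into F via the canonical ring map ℤ → F). -/

import Mathlib

open Finset

private def pfdC {F : Type*} [Field F] (x y : F) (a b j : ℕ) : F :=
  (-1 : F) ^ b * ((j - 1).choose (b - 1) : F) / x ^ (a + b - j) +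
    (-1 : F) ^ (j + a) * ((j - 1).choose (a - 1) : F) / y ^ (a + b - j)

private def pfdS {F : Type*} [Field F] (x y : F) (a b : ℕ) : F :=
  ∑ j ∈ Ioo 0 (a + b), (1 / (x - y) ^ j) * pfdC x y a b j

private lemma pfd_shift {F : Type*} [Field F] (m : ℕ) (f : ℕ → F) :
    ∑ j ∈ Ioo 0 (m + 1), f j = ∑ i ∈ range m, f (i + 1) := by
  rw [← Finset.Ico_add_one_left_eq_Ioo, Finset.sum_Ico_eq_sum_range]
  simp [add_comm]

private lemma pfd_mul {F : Type*} [Field F] (x y : F) (hd : x - y ≠ 0) (a b n : ℕ)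
    (hn : a + b = n + 2) :
    pfdS x y a b * (x - y) =
      (∑ i ∈ range n, (1 / (x - y) ^ (i + 1)) * pfdC x y a b (i + 2)) + pfdC x y a b 1 := by
  have hstep : ∀ (k : ℕ) (z : F), 1 / (x - y) ^ (k + 1) * z * (x - y) = 1 / (x - y) ^ k * z := by
    intro k z
    rw [pow_succ]
    field_simp
  unfold pfdS
  rw [hn, pfd_shift (n + 1), Finset.sum_mul, Finset.sum_range_succ']
  simp only [hstep]
  norm_num

private lemma pfd_key_a {F : Type*} [Field F] (x y : F) (hd : x - y ≠ 0) (B : ℕ) :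
    pfdS x y 1 (B + 2) * (x - y) = 1 / y ^ (B + 2) - pfdS x y 1 (B + 1) := by
  rw [pfd_mul x y hd _ _ (B + 1) (by omega)]
  have h1 : pfdC x y 1 (B + 2) 1 = 1 / y ^ (B + 2) := by
    unfold pfdC
    rw [Nat.choose_eq_zero_of_lt (by omega : (1:ℕ) - 1 < B + 2 - 1)]
    norm_num
  rw [h1]
  have h2 : pfdS x y 1 (B + 1) = ∑ i ∈ range (B + 1),
      (1 / (x - y) ^ (i + 1)) * pfdC x y 1 (B + 1) (i + 1) := by
    unfold pfdS
    rw [show 1 + (B + 1) = (B + 1) + 1 from by omega, pfd_shift]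
  rw [h2]
  have h3 : ∀ i ∈ range (B + 1),
      (1 / (x - y) ^ (i + 1)) * pfdC x y 1 (B + 2) (i + 2)
        = -((1 / (x - y) ^ (i + 1)) * pfdC x y 1 (B + 1) (i + 1)) := by
    intro i hi
    rw [mem_range] at hi
    have hc : pfdC x y 1 (B + 2) (i + 2) = -pfdC x y 1 (B + 1) (i + 1) := by
      unfold pfdC
      rw [show 1 + (B + 2) - (i + 2) = B + 1 - i from by omega,
        show 1 + (B + 1) - (i + 1) = B + 1 - i from by omega,
        show (i + 2) - 1 = i + 1 from rfl, show (i + 1) - 1 = i from rfl,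
        show (B + 2) - 1 = B + 1 from rfl, show (B + 1) - 1 = B from rfl,
        show (1 : ℕ) - 1 = 0 from rfl,
        Nat.choose_succ_succ i B, Nat.choose_eq_zero_of_lt (by omega : i < B + 1)]
      simp only [Nat.choose_zero_right]
      push_cast
      ring
    rw [hc]
    ring
  rw [Finset.sum_congr rfl h3, Finset.sum_neg_distrib]
  ring

private lemma pfd_key_b {F : Type*} [Field F] (x y : F) (hd : x - y ≠ 0) (A : ℕ) :
    pfdS x y (A + 2) 1 * (x - y) = pfdS x y (A + 1) 1 - 1 / x ^ (A + 2) := by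
  rw [pfd_mul x y hd _ _ (A + 1) (by omega)]
  have h1 : pfdC x y (A + 2) 1 1 = -(1 / x ^ (A + 2)) := by
    unfold pfdC
    rw [Nat.choose_eq_zero_of_lt (by omega : (1:ℕ) - 1 < A + 2 - 1)]
    norm_num
    ring
  rw [h1]
  have h2 : pfdS x y (A + 1) 1 = ∑ i ∈ range (A + 1),
      (1 / (x - y) ^ (i + 1)) * pfdC x y (A + 1) 1 (i + 1) := by
    unfold pfdS
    rw [show (A + 1) + 1 = (A + 1) + 1 from rfl, pfd_shift]
  rw [h2]
  have h3 : ∀ i ∈ range (A + 1),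
      (1 / (x - y) ^ (i + 1)) * pfdC x y (A + 2) 1 (i + 2)
        = (1 / (x - y) ^ (i + 1)) * pfdC x y (A + 1) 1 (i + 1) := by
    intro i hi
    rw [mem_range] at hi
    have hc : pfdC x y (A + 2) 1 (i + 2) = pfdC x y (A + 1) 1 (i + 1) := by
      unfold pfdC
      rw [show (A + 2) + 1 - (i + 2) = A + 1 - i from by omega,
        show (A + 1) + 1 - (i + 1) = A + 1 - i from by omega,
        show (i + 2) - 1 = i + 1 from rfl, show (i + 1) - 1 = i from rfl,
        show (A + 2) - 1 = A + 1 from rfl, show (A + 1) - 1 = A from rfl,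
        show (1 : ℕ) - 1 = 0 from rfl,
        Nat.choose_succ_succ i A, Nat.choose_eq_zero_of_lt (by omega : i < A + 1)]
      simp only [Nat.choose_zero_right]
      push_cast
      ring
    rw [hc]
  rw [Finset.sum_congr rfl h3]
  ring

private lemma pfd_key_gen {F : Type*} [Field F] (x y : F) (hd : x - y ≠ 0) (A B : ℕ) :
    pfdS x y (A + 2) (B + 2) * (x - y)
      = pfdS x y (A + 1) (B + 2) - pfdS x y (A + 2) (B + 1) := by
  rw [pfd_mul x y hd _ _ (A + B + 2) (by omega)]
  have h1 : pfdC x y (A + 2) (B + 2) 1 = 0 := by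
    unfold pfdC
    rw [Nat.choose_eq_zero_of_lt (by omega : (1:ℕ) - 1 < B + 2 - 1),
      Nat.choose_eq_zero_of_lt (by omega : (1:ℕ) - 1 < A + 2 - 1)]
    norm_num
  rw [h1, add_zero]
  have h2 : pfdS x y (A + 1) (B + 2) = ∑ i ∈ range (A + B + 2),
      (1 / (x - y) ^ (i + 1)) * pfdC x y (A + 1) (B + 2) (i + 1) := by
    unfold pfdS
    rw [show (A + 1) + (B + 2) = (A + B + 2) + 1 from by omega, pfd_shift]
  have h3 : pfdS x y (A + 2) (B + 1) = ∑ i ∈ range (A + B + 2),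
      (1 / (x - y) ^ (i + 1)) * pfdC x y (A + 2) (B + 1) (i + 1) := by
    unfold pfdS
    rw [show (A + 2) + (B + 1) = (A + B + 2) + 1 from by omega, pfd_shift]
  rw [h2, h3, ← Finset.sum_sub_distrib]
  apply Finset.sum_congr rfl
  intro i _
  have hc : pfdC x y (A + 2) (B + 2) (i + 2)
      = pfdC x y (A + 1) (B + 2) (i + 1) - pfdC x y (A + 2) (B + 1) (i + 1) := by
    unfold pfdC
    rw [show (A + 2) + (B + 2) - (i + 2) = A + B + 2 - i from by omega,
      show (A + 1) + (B + 2) - (i + 1) = A + B + 2 - i from by omega,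
      show (A + 2) + (B + 1) - (i + 1) = A + B + 2 - i from by omega,
      show (i + 2) - 1 = i + 1 from rfl, show (i + 1) - 1 = i from rfl,
      show (B + 2) - 1 = B + 1 from rfl, show (B + 1) - 1 = B from rfl,
      show (A + 2) - 1 = A + 1 from rfl, show (A + 1) - 1 = A from rfl,
      Nat.choose_succ_succ i B, Nat.choose_succ_succ i A]
    push_cast
    ring
  rw [hc]
  ring

private lemma pfd_main {F : Type*} [Field F] (x y : F) (hx : x ≠ 0) (hy : y ≠ 0)
    (hd : x - y ≠ 0) :
    ∀ n a b, a + b ≤ n → 1 ≤ a → 1 ≤ b → pfdS x y a b = 1 / (x ^ a * y ^ b) := by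
  intro n
  induction n with
  | zero => intro a b h ha hb; omega
  | succ n ih =>
    intro a b h ha hb
    match a, b with
    | 1, 1 =>
      unfold pfdS
      rw [show (1:ℕ) + 1 = 2 from rfl, show Ioo 0 2 = {1} from rfl, Finset.sum_singleton]
      unfold pfdC
      norm_num
      field_simp
      ring
    | 1, B + 2 =>
      have key := pfd_key_a x y hd B
      rw [ih 1 (B + 1) (by omega) le_rfl (by omega)] at key
      apply mul_right_cancel₀ hd
      rw [key]
      field_simp
      ring
    | A + 2, 1 =>
      have key := pfd_key_b x y hd A
      rw [ih (A + 1) 1 (by omega) (by omega) le_rfl] at key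
      apply mul_right_cancel₀ hd
      rw [key]
      field_simp
      ring
    | A + 2, B + 2 =>
      have key := pfd_key_gen x y hd A B
      rw [ih (A + 1) (B + 2) (by omega) (by omega) (by omega),
        ih (A + 2) (B + 1) (by omega) (by omega) (by omega)] at key
      apply mul_right_cancel₀ hd
      rw [key]
      field_simp
      ring

/-- **Partial fraction decomposition.**
Let `R` be an integral domain with fraction field `F`, and `f, g ∈ R` nonzero with `f ≠ g`.
For all positive integers `a, b`:
`1/(f^a g^b) = ∑_{i+j=a+b, i,j ≥ 1} (1/(f-g)^j) ((-1)^b C(j-1,b-1)/f^i + (-1)^{j-a} C(j-1,a-1)/g^i)`,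
where `i = a + b - j`. -/
theorem partial_fraction_decomposition
    (R : Type*) [CommRing R] [IsDomain R]
    (F : Type*) [Field F] [Algebra R F] [IsFractionRing R F]
    (f g : R) (hf : f ≠ 0) (hg : g ≠ 0) (hfg : f ≠ g)
    (a b : ℕ) (ha : 0 < a) (hb : 0 < b) :
    1 / (algebraMap R F f ^ a * algebraMap R F g ^ b) =
      ∑ j ∈ Finset.Ioo 0 (a + b),
        (1 / (algebraMap R F f - algebraMap R F g) ^ j) *
          (((-1 : F) ^ b * ((j - 1).choose (b - 1) : F) / algebraMap R F f ^ (a + b - j)) +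
            ((-1 : F) ^ ((j : ℤ) - (a : ℤ)) * ((j - 1).choose (a - 1) : F) /
              algebraMap R F g ^ (a + b - j))) := by
  set x := algebraMap R F f with hxdef
  set y := algebraMap R F g with hydef
  have hx : x ≠ 0 := by
    simpa [hxdef] using (IsFractionRing.to_map_eq_zero_iff (K := F)).not.mpr hf
  have hy : y ≠ 0 := by
    simpa [hydef] using (IsFractionRing.to_map_eq_zero_iff (K := F)).not.mpr hg
  have hd : x - y ≠ 0 := by
    rw [hxdef, hydef, ← map_sub]
    exact (IsFractionRing.to_map_eq_zero_iff (K := F)).not.mpr (sub_ne_zero_of_ne hfg)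
  rw [← pfd_main x y hx hy hd (a + b) a b le_rfl ha hb]
  unfold pfdS pfdC
  apply Finset.sum_congr rfl
  intro j hj
  have hsign : ((-1 : F) ^ ((j : ℤ) - (a : ℤ))) = (-1 : F) ^ (j + a) := by
    rw [zpow_sub₀ (by norm_num : (-1 : F) ≠ 0), zpow_natCast, zpow_natCast, pow_add,
      div_eq_mul_inv, ← inv_pow, inv_neg_one]
  rw [hsign]
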